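/- Let D be a finite closed natural-deduction derivation in a system where the only assumption-discharging rule FIX has a single premise equal to its conclusion and side-condition that its immediate subderivation has depth ≥ 1. Define an unfolding procedure that repeatedly removes a bottommost FIX instance and grafts a copy of its immediate subderivation above each leaf that was an assumption discharged by that instance. Then this procedure is productive: for every depth d, after finitely many unfolding steps the tree below depth d stabilizes, so the limit is a well-defined (possibly infinite) tree with the same conclusion in which no FIX instances or open assumptions occur. -/

import Mathlib

/-- Abstract natural-deduction derivation trees: axiom leaves, rule nodes
(non-FIX rule instances, with a list of premises), FIX nodes discharging the
assumption leaves carrying their marker, and marked assumption leaves. -/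
inductive DTr (M : Type) : Type
  | axn : DTr M
  | rule : List (DTr M) → DTr M
  | fix : M → DTr M → DTr M
  | assum : M → DTr M

namespace DTr

variable {M : Type} [DecidableEq M]

/-- Graft `G` onto every assumption leaf marked `u` (stopping at FIX nodes
that rebind the marker `u`). -/
def graft (u : M) (G : DTr M) : DTr M → DTr M
  | .axn => .axn
  | .rule ts => .rule (ts.attach.map fun x => graft u G x.1)
  | .fix v D => if v = u then .fix v D else .fix v (graft u G D)
  | .assum v => if v = u then G else .assum v
decreasing_by
  all_goals simp_wf
  all_goals first
    | (have := List.sizeOf_lt_of_mem x.2; omega)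
    | (simp only [DTr.fix.sizeOf_spec]; omega)
    | omega

/-- One step of the unfolding procedure: each bottommost FIX instance
`fix u D₀` is removed and a copy of the whole FIX derivation is grafted onto
every assumption leaf it discharges, i.e. `fix u D₀ ↦ D₀[assumᵘ := fix u D₀]`. -/
def stepD : DTr M → DTr M
  | .axn => .axn
  | .assum v => .assum v
  | .rule ts => .rule (ts.attach.map fun x => stepD x.1)
  | .fix u D => graft u (.fix u D) D
decreasing_by
  all_goals simp_wf
  all_goals first
    | (have := List.sizeOf_lt_of_mem x.2; omega)
    | (simp only [DTr.fix.sizeOf_spec]; omega)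
    | omega

/-- All assumption leaves marked `u` are guarded, i.e. lie strictly below at
least one (non-FIX) rule node. -/
def GuardedTo (u : M) : DTr M → Prop
  | .axn => True
  | .rule _ => True
  | .fix v D => v = u ∨ GuardedTo u D
  | .assum v => v ≠ u

/-- The guardedness condition: every FIX instance guards all assumption
leaves it discharges (the consequence of the side-condition
`depth(D₀) ≥ 1` established by the guardedness proposition). -/
inductive Guarded : DTr M → Prop
  | axn : Guarded .axn
  | assum (v : M) : Guarded (.assum v)
  | rule {ts : List (DTr M)} : (∀ t ∈ ts, Guarded t) → Guarded (.rule ts)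
  | fix {u : M} {D : DTr M} : Guarded D → GuardedTo u D → Guarded (.fix u D)

/-- Closedness: every assumption marker is discharged by an enclosing FIX. -/
inductive Closed : Set M → DTr M → Prop
  | axn (S : Set M) : Closed S .axn
  | assum (S : Set M) (v : M) (h : v ∈ S) : Closed S (.assum v)
  | rule (S : Set M) {ts : List (DTr M)} : (∀ t ∈ ts, Closed S t) → Closed S (.rule ts)
  | fix (S : Set M) {u : M} {D : DTr M} : Closed (insert u S) D → Closed S (.fix u D)

/-- Truncation of a tree at depth `d`. -/
def trunc : ℕ → DTr M → DTr M
  | 0, _ => .axn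
  | _ + 1, .axn => .axn
  | _ + 1, .assum v => .assum v
  | d + 1, .rule ts => .rule (ts.attach.map fun x => trunc d x.1)
  | d + 1, .fix u D => .fix u (trunc d D)
termination_by d _ => d

/-- A tree contains no FIX nodes and no assumption leaves. -/
inductive FixFree : DTr M → Prop
  | axn : FixFree .axn
  | rule {ts : List (DTr M)} : (∀ t ∈ ts, FixFree t) → FixFree (.rule ts)

end DTr

namespace DTr

section Aux
variable {M : Type} [DecidableEq M]

/-- Custom structural induction principle handling the nested list. -/
theorem ind' {motive : DTr M → Prop} (haxn : motive .axn)
    (hrule : ∀ ts, (∀ t ∈ ts, motive t) → motive (.rule ts))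
    (hfix : ∀ u D, motive D → motive (.fix u D))
    (hassum : ∀ v, motive (.assum v)) : ∀ D, motive D := fun D =>
  match D with
  | .axn => haxn
  | .rule ts => hrule ts (fun t ht => ind' haxn hrule hfix hassum t)
  | .fix u D => hfix u D (ind' haxn hrule hfix hassum D)
  | .assum v => hassum v
decreasing_by
  all_goals simp_wf
  all_goals first
    | (have := List.sizeOf_lt_of_mem ht; omega)
    | (simp only [DTr.fix.sizeOf_spec]; omega)
    | omega

@[simp] theorem graft_axn (u : M) (G : DTr M) : graft u G .axn = .axn := by rw [graft]

@[simp] theorem graft_rule (u : M) (G : DTr M) (ts : List (DTr M)) :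
    graft u G (.rule ts) = .rule (ts.map (graft u G)) := by
  rw [graft]; simp [List.attach_map_val]

theorem graft_fix (u : M) (G : DTr M) (v : M) (D : DTr M) :
    graft u G (.fix v D) = if v = u then .fix v D else .fix v (graft u G D) := by
  rw [graft]

theorem graft_assum (u : M) (G : DTr M) (v : M) :
    graft u G (.assum v) = if v = u then G else .assum v := by rw [graft]

@[simp] theorem stepD_axn : stepD (.axn : DTr M) = .axn := by rw [stepD]
@[simp] theorem stepD_assum (v : M) : stepD (.assum v : DTr M) = .assum v := by rw [stepD]
@[simp] theorem stepD_rule (ts : List (DTr M)) :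
    stepD (.rule ts) = .rule (ts.map stepD) := by
  rw [stepD]; simp [List.attach_map_val]
@[simp] theorem stepD_fix (u : M) (D : DTr M) :
    stepD (.fix u D) = graft u (.fix u D) D := by rw [stepD]

@[simp] theorem trunc_zero (D : DTr M) : trunc 0 D = .axn := by rw [trunc]
@[simp] theorem trunc_axn (d : ℕ) : trunc (d+1) (.axn : DTr M) = .axn := by rw [trunc]
@[simp] theorem trunc_assum (d : ℕ) (v : M) :
    trunc (d+1) (.assum v : DTr M) = .assum v := by rw [trunc]
@[simp] theorem trunc_rule (d : ℕ) (ts : List (DTr M)) :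
    trunc (d+1) (.rule ts) = .rule (ts.map (trunc d)) := by
  rw [trunc]; simp [List.attach_map_val]
@[simp] theorem trunc_fix (d : ℕ) (u : M) (D : DTr M) :
    trunc (d+1) (.fix u D) = .fix u (trunc d D) := by rw [trunc]

/-- A tree contains an (unshadowed) assumption leaf marked `u`. -/
inductive ContainsAssum (u : M) : DTr M → Prop
  | assum : ContainsAssum u (.assum u)
  | rule {ts : List (DTr M)} {t : DTr M} : t ∈ ts → ContainsAssum u t →
      ContainsAssum u (.rule ts)
  | fix {v : M} {D : DTr M} : v ≠ u → ContainsAssum u D → ContainsAssum u (.fix v D)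

theorem graft_of_not_contains {u : M} {G D : DTr M} (h : ¬ ContainsAssum u D) :
    graft u G D = D := by
  induction D using ind' with
  | haxn => simp
  | hrule ts ih =>
      simp only [graft_rule]
      have : ts.map (graft u G) = ts.map id :=
        List.map_congr_left (fun t ht => ih t ht (fun hc => h (ContainsAssum.rule ht hc)))
      rw [this, List.map_id]
  | hfix v D ih =>
      rw [graft_fix]
      split
      · rfl
      · rename_i hvu
        rw [ih (fun hc => h (ContainsAssum.fix hvu hc))]
  | hassum v =>
      rw [graft_assum]
      split
      · rename_i hv; subst hv; exact absurd ContainsAssum.assum h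
      · rfl

theorem not_guardedTo_not_contains {v u : M} {D : DTr M} (hvu : v ≠ u)
    (h : ¬ GuardedTo v D) : ¬ ContainsAssum u D := by
  induction D using ind' with
  | haxn => exact absurd trivial h
  | hrule ts ih => exact absurd trivial h
  | hfix w D ih =>
      intro hc
      cases hc with
      | fix hwu hc =>
          have : ¬ GuardedTo v D := fun hg => h (Or.inr hg)
          exact ih this hc
  | hassum w =>
      intro hc
      cases hc
      exact h (by simp [GuardedTo]; exact fun e => hvu e.symm)

theorem guardedTo_graft {u w : M} {G D : DTr M} (hG : GuardedTo w G)
    (hD : GuardedTo w D) : GuardedTo w (graft u G D) := by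
  induction D using ind' with
  | haxn => simpa [GuardedTo] using trivial
  | hrule ts ih => rw [graft_rule]; trivial
  | hfix v D ih =>
      rw [graft_fix]
      split
      · exact hD
      · rcases hD with h | h
        · exact Or.inl h
        · exact Or.inr (ih h)
  | hassum v =>
      rw [graft_assum]
      split
      · exact hG
      · exact hD

theorem guarded_graft {u : M} {G : DTr M} (hGg : Guarded G)
    (hall : ∀ w, GuardedTo w G) : ∀ {D : DTr M}, Guarded D → Guarded (graft u G D) := by
  intro D hD
  induction hD with
  | axn => simpa using Guarded.axn
  | assum v =>
      rw [graft_assum]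
      split
      · exact hGg
      · exact Guarded.assum v
  | rule h ih =>
      rw [graft_rule]
      refine Guarded.rule ?_
      intro t' ht'
      rcases List.mem_map.1 ht' with ⟨t, ht, rfl⟩
      exact ih t ht
  | fix hD hGt ih =>
      rename_i v D
      rw [graft_fix]
      split
      · exact Guarded.fix hD hGt
      · exact Guarded.fix ih (guardedTo_graft (hall v) hGt)

theorem guarded_stepD : ∀ {D : DTr M}, Guarded D → Guarded (stepD D) := by
  intro D hD
  induction hD with
  | axn => simpa using Guarded.axn
  | assum v => simpa using Guarded.assum v
  | rule h ih =>
      rw [stepD_rule]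
      refine Guarded.rule ?_
      intro t' ht'
      rcases List.mem_map.1 ht' with ⟨t, ht, rfl⟩
      exact ih t ht
  | fix hD0 hGt ih =>
      rename_i u D0
      rw [stepD_fix]
      by_cases hc : ContainsAssum u D0
      · refine guarded_graft (Guarded.fix hD0 hGt) ?_ hD0
        intro w
        by_cases hwu : u = w
        · exact Or.inl hwu
        · by_contra hng
          have h1 : ¬ GuardedTo w D0 := fun hg => hng (Or.inr hg)
          exact not_guardedTo_not_contains (fun e => hwu e.symm) h1 hc
      · rw [graft_of_not_contains hc]; exact hD0

theorem closed_mono {S S' : Set M} (hss : S ⊆ S') :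
    ∀ {D : DTr M}, Closed S D → Closed S' D := by
  intro D hD
  induction hD generalizing S' with
  | axn => exact Closed.axn _
  | assum _ v h => exact Closed.assum _ v (hss h)
  | rule _ h ih => exact Closed.rule _ (fun t ht => ih t ht hss)
  | fix _ h ih => exact Closed.fix _ (ih (Set.insert_subset_insert hss))

theorem closed_rule_inv {S : Set M} {ts : List (DTr M)} (h : Closed S (.rule ts)) :
    ∀ t ∈ ts, Closed S t := by cases h; assumption

theorem closed_fix_inv {S : Set M} {u : M} {D : DTr M} (h : Closed S (.fix u D)) :
    Closed (insert u S) D := by cases h; assumption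

theorem guarded_rule_inv {ts : List (DTr M)} (h : Guarded (.rule ts)) :
    ∀ t ∈ ts, Guarded t := by cases h; assumption

theorem closed_graft {u : M} {G : DTr M} :
    ∀ {D : DTr M} {S : Set M}, Closed S G → Closed (insert u S) D →
      Closed S (graft u G D) := by
  intro D
  induction D using ind' with
  | haxn => intro S hG hD; simpa using Closed.axn S
  | hrule ts ih =>
      intro S hG hD
      rw [graft_rule]
      refine Closed.rule S ?_
      intro t' ht'
      rcases List.mem_map.1 ht' with ⟨t, ht, rfl⟩
      exact ih t ht hG (closed_rule_inv hD t ht)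
  | hfix v D ih =>
      intro S hG hD
      rw [graft_fix]
      have hD' := closed_fix_inv hD
      split
      · rename_i hvu; subst hvu
        refine Closed.fix S ?_
        refine closed_mono ?_ hD'
        intro x hx
        rcases hx with hx | hx
        · exact Or.inl hx
        · exact hx
      · rename_i hvu
        refine Closed.fix S ?_
        refine ih (closed_mono (Set.subset_insert v S) hG) ?_
        refine closed_mono ?_ hD'
        intro x hx
        rcases hx with hx | hx
        · exact Or.inr (Or.inl hx)
        · rcases hx with hx | hx
          · exact Or.inl hx
          · exact Or.inr (Or.inr hx)
  | hassum v =>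
      intro S hG hD
      rw [graft_assum]
      split
      · exact hG
      · rename_i hvu
        cases hD with
        | assum _ _ h =>
            rcases h with h | h
            · exact absurd h hvu
            · exact Closed.assum S v h

theorem closed_stepD : ∀ {D : DTr M} {S : Set M}, Closed S D → Closed S (stepD D) := by
  intro D
  induction D using ind' with
  | haxn => intro S h; simpa using h
  | hrule ts ih =>
      intro S h
      rw [stepD_rule]
      exact Closed.rule S (fun t' ht' => by
        rcases List.mem_map.1 ht' with ⟨t, ht, rfl⟩
        exact ih t ht (closed_rule_inv h t ht))
  | hfix u D ih =>
      intro S h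
      rw [stepD_fix]
      exact closed_graft h (closed_fix_inv h)
  | hassum v => intro S h; simpa using h

/-- Length of the chain of FIX nodes at the root. -/
def spine : DTr M → ℕ
  | .fix _ D => spine D + 1
  | _ => 0

@[simp] theorem spine_axn : spine (.axn : DTr M) = 0 := rfl
@[simp] theorem spine_rule (ts : List (DTr M)) : spine (.rule ts) = 0 := rfl
@[simp] theorem spine_assum (v : M) : spine (.assum v : DTr M) = 0 := rfl
@[simp] theorem spine_fix (u : M) (D : DTr M) : spine (.fix u D) = spine D + 1 := rfl

theorem spine_graft {u : M} {G : DTr M} :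
    ∀ {D : DTr M}, GuardedTo u D → spine (graft u G D) = spine D := by
  intro D
  induction D using ind' with
  | haxn => intro _; simp
  | hrule ts ih => intro _; simp
  | hfix v D ih =>
      intro h
      rw [graft_fix]
      split
      · rfl
      · rename_i hvu
        rcases h with h | h
        · exact absurd h hvu
        · simp [ih h]
  | hassum v =>
      intro h
      rw [graft_assum]
      split
      · rename_i hv; exact absurd hv h
      · rfl

/-- All FIX nodes and assumption leaves lie at depth at least `d`. -/
def Deep : ℕ → DTr M → Prop
  | 0, _ => True
  | _ + 1, .axn => True
  | d + 1, .rule ts => ∀ t ∈ ts, Deep d t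
  | _ + 1, .fix _ _ => False
  | _ + 1, .assum _ => False
termination_by d _ => d

@[simp] theorem deep_zero (D : DTr M) : Deep 0 D = True := by rw [Deep]
@[simp] theorem deep_axn (d : ℕ) : Deep (d+1) (.axn : DTr M) = True := by rw [Deep]
@[simp] theorem deep_rule (d : ℕ) (ts : List (DTr M)) :
    Deep (d+1) (.rule ts) = ∀ t ∈ ts, Deep d t := by rw [Deep]
@[simp] theorem deep_fix (d : ℕ) (u : M) (D : DTr M) :
    Deep (d+1) (.fix u D) = False := by rw [Deep]
@[simp] theorem deep_assum (d : ℕ) (v : M) :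
    Deep (d+1) (.assum v : DTr M) = False := by rw [Deep]

theorem deep_stepD : ∀ (d : ℕ) {D : DTr M}, Deep d D → Deep d (stepD D) := by
  intro d
  induction d with
  | zero => intro D _; simp
  | succ d ih =>
      intro D hD
      cases D with
      | axn => simpa using hD
      | rule ts =>
          rw [stepD_rule]
          rw [deep_rule] at hD ⊢
          intro t' ht'
          rcases List.mem_map.1 ht' with ⟨t, ht, rfl⟩
          exact ih (hD t ht)
      | fix u D => simp at hD
      | assum v => simp at hD

theorem deep_iter_le {d : ℕ} {D : DTr M} {n m : ℕ} (hnm : n ≤ m)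
    (h : Deep d (stepD^[n] D)) : Deep d (stepD^[m] D) := by
  obtain ⟨k, rfl⟩ := Nat.exists_eq_add_of_le hnm
  rw [Nat.add_comm, Function.iterate_add_apply]
  clear hnm
  induction k with
  | zero => exact h
  | succ k ih => rw [Function.iterate_succ_apply']; exact deep_stepD d ih

theorem guarded_iter {D : DTr M} (h : Guarded D) (n : ℕ) : Guarded (stepD^[n] D) := by
  induction n with
  | zero => exact h
  | succ n ih => rw [Function.iterate_succ_apply']; exact guarded_stepD ih

theorem closed_iter {S : Set M} {D : DTr M} (h : Closed S D) (n : ℕ) :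
    Closed S (stepD^[n] D) := by
  induction n with
  | zero => exact h
  | succ n ih => rw [Function.iterate_succ_apply']; exact closed_stepD ih

theorem stepD_iterate_rule (n : ℕ) (ts : List (DTr M)) :
    stepD^[n] (.rule ts) = .rule (ts.map stepD^[n]) := by
  induction n generalizing ts with
  | zero => simp
  | succ n ih =>
      rw [Function.iterate_succ_apply, stepD_rule, ih, List.map_map]
      exact congrArg DTr.rule
        (List.map_congr_left fun t _ => (Function.iterate_succ_apply stepD n t).symm)

theorem eventually_deep_one :
    ∀ (n : ℕ) (D : DTr M), spine D ≤ n → Guarded D → Closed (∅ : Set M) D →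
      ∃ N, Deep 1 (stepD^[N] D) := by
  intro n
  induction n with
  | zero =>
      intro D hsp hg hc
      cases D with
      | axn => exact ⟨0, by simp⟩
      | rule ts => exact ⟨0, by simp⟩
      | fix u D => simp at hsp
      | assum v => cases hc with | assum _ _ h => exact absurd h (Set.notMem_empty v)
  | succ n ih =>
      intro D hsp hg hc
      cases D with
      | axn => exact ⟨0, by simp⟩
      | rule ts => exact ⟨0, by simp⟩
      | assum v => cases hc with | assum _ _ h => exact absurd h (Set.notMem_empty v)
      | fix u D =>
          cases hg with
          | fix hgD hgt =>
            have hsp' : spine (stepD (.fix u D)) ≤ n := by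
              rw [stepD_fix, spine_graft hgt]
              simp at hsp; omega
            obtain ⟨N, hN⟩ := ih _ hsp' (guarded_stepD (Guarded.fix hgD hgt))
              (closed_stepD hc)
            exact ⟨N + 1, by rwa [Function.iterate_succ_apply]⟩

theorem list_eventually {d : ℕ} (ts : List (DTr M))
    (h : ∀ t ∈ ts, ∃ N, Deep d (stepD^[N] t)) :
    ∃ N, ∀ t ∈ ts, Deep d (stepD^[N] t) := by
  induction ts with
  | nil => exact ⟨0, by simp⟩
  | cons a l ih =>
      obtain ⟨Na, hNa⟩ := h a (by simp)
      obtain ⟨Nl, hNl⟩ := ih (fun t ht => h t (List.mem_cons_of_mem a ht))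
      refine ⟨max Na Nl, ?_⟩
      intro t ht
      rcases List.mem_cons.1 ht with rfl | ht
      · exact deep_iter_le (Nat.le_max_left _ _) hNa
      · exact deep_iter_le (Nat.le_max_right _ _) (hNl t ht)

theorem eventually_deep (d : ℕ) :
    ∀ (D : DTr M), Guarded D → Closed (∅ : Set M) D →
      ∃ N, Deep d (stepD^[N] D) := by
  induction d with
  | zero => intro D _ _; exact ⟨0, by simp⟩
  | succ d ih =>
      intro D hg hc
      obtain ⟨N₀, hN₀⟩ := eventually_deep_one (spine D) D le_rfl hg hc
      have hgE := guarded_iter hg N₀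
      have hcE := closed_iter hc N₀
      set E := stepD^[N₀] D with hE
      clear_value E
      cases E with
      | axn =>
          refine ⟨N₀, ?_⟩
          rw [← hE]
          have : ∀ k, stepD^[k] (.axn : DTr M) = .axn := by
            intro k; induction k with
            | zero => rfl
            | succ k ihk => rw [Function.iterate_succ_apply']; rw [ihk]; simp
          simp
      | fix u E0 => simp at hN₀
      | assum v => simp at hN₀
      | rule ts =>
          have hch : ∀ t ∈ ts, ∃ N, Deep d (stepD^[N] t) := by
            intro t ht
            exact ih t (guarded_rule_inv hgE t ht) (closed_rule_inv hcE t ht)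
          obtain ⟨N₁, hN₁⟩ := list_eventually ts hch
          refine ⟨N₁ + N₀, ?_⟩
          rw [Function.iterate_add_apply, ← hE, stepD_iterate_rule]
          rw [deep_rule]
          intro t' ht'
          rcases List.mem_map.1 ht' with ⟨t, ht, rfl⟩
          exact hN₁ t ht

theorem trunc_stepD : ∀ (d : ℕ) {D : DTr M}, Deep d D →
    trunc d (stepD D) = trunc d D := by
  intro d
  induction d with
  | zero => intro D _; simp
  | succ d ih =>
      intro D hD
      cases D with
      | axn => simp
      | rule ts =>
          rw [deep_rule] at hD
          rw [stepD_rule, trunc_rule, trunc_rule, List.map_map]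
          congr 1
          apply List.map_congr_left
          intro t ht
          exact ih (hD t ht)
      | fix u D => simp at hD
      | assum v => simp at hD

theorem trunc_fixFree : ∀ (d : ℕ) {D : DTr M}, Deep d D → FixFree (trunc d D) := by
  intro d
  induction d with
  | zero => intro D _; simpa using FixFree.axn
  | succ d ih =>
      intro D hD
      cases D with
      | axn => simpa using FixFree.axn
      | rule ts =>
          rw [deep_rule] at hD
          rw [trunc_rule]
          refine FixFree.rule ?_
          intro t' ht'
          rcases List.mem_map.1 ht' with ⟨t, ht, rfl⟩
          exact ih (hD t ht)
      | fix u D => simp at hD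
      | assum v => simp at hD

end Aux

end DTr

/-- For a finite closed derivation `D` satisfying the
guardedness condition on FIX instances, the unfolding procedure is
productive: for every depth `d` the truncation at depth `d` of the iterated
unfoldings of `D` eventually stabilizes, and the stable truncation contains
no FIX instances and no open assumptions — so the limit is a well-defined
(possibly infinite) completed derivation tree with the same conclusion. -/
theorem stmt5 {M : Type} [DecidableEq M] (D : DTr M)
    (hg : DTr.Guarded D) (hc : DTr.Closed (∅ : Set M) D) (d : ℕ) :
    ∃ N : ℕ, (∀ m : ℕ, N ≤ m →
        DTr.trunc d (DTr.stepD^[m] D) = DTr.trunc d (DTr.stepD^[N] D)) ∧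
      DTr.FixFree (DTr.trunc d (DTr.stepD^[N] D)) := by
  obtain ⟨N, hN⟩ := DTr.eventually_deep d D hg hc
  refine ⟨N, ?_, DTr.trunc_fixFree d hN⟩
  intro m hm
  obtain ⟨k, rfl⟩ := Nat.exists_eq_add_of_le hm
  induction k with
  | zero => rfl
  | succ k ih =>
      rw [show N + (k + 1) = (N + k) + 1 from rfl, Function.iterate_succ_apply',
        DTr.trunc_stepD d (DTr.deep_iter_le (Nat.le_add_right N k) hN)]
      exact ih (Nat.le_add_right N k)
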